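/- Define g : [0,1]³ → ℝ by g(x,y,z) := √(C(x,y,z) + D(x,y,z)) + √(C(x,y,z) − D(x,y,z)), where C(x,y,z) := (x²y² + (1−x²)z² + (1−y²)z²)/4 and D(x,y,z) := (√(1−x²)·√(1−y²)·z²)/2. Define the lower tri-convex envelope ğ : [0,1]³ → ℝ by ğ(x,y,z) := sup { θ(x,y,z) | θ : [0,1]³ → [0,1], θ ≤ g pointwise on [0,1]³, and θ is tri-convex on [0,1]³ }. Let α : Fin ℓ → ℝ, β : Fin m → ℝ, γ : Fin n → ℝ be nonnegative weights each summing to 1, and let x : Fin ℓ → [0,1], y : Fin m → [0,1], z : Fin n → [0,1]. Then ∑_{i,j,k} α_i β_j γ_k g(x_i, y_j, z_k) ≥ ğ(∑_i α_i x_i, ∑_j β_j y_j, ∑_k γ_k z_k). (This is the statement that for BMS channels U, V, W, Z((U Ｐ V) Ｓ W) ≥ ğ(Z(U), Z(V), Z(W)).) -/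
import Mathlib

/-- `C(x,y,z) := (x²y² + (1−x²)z² + (1−y²)z²)/4`. -/
noncomputable def Cfun (x y z : ℝ) : ℝ :=
  (x ^ 2 * y ^ 2 + (1 - x ^ 2) * z ^ 2 + (1 - y ^ 2) * z ^ 2) / 4

/-- `D(x,y,z) := (√(1−x²)·√(1−y²)·z²)/2`. -/
noncomputable def Dfun (x y z : ℝ) : ℝ :=
  Real.sqrt (1 - x ^ 2) * Real.sqrt (1 - y ^ 2) * z ^ 2 / 2

/-- `g(x,y,z) := √(C+D) + √(C−D)`, the tri-variate Bhattacharyya function. -/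
noncomputable def gfun (x y z : ℝ) : ℝ :=
  Real.sqrt (Cfun x y z + Dfun x y z) + Real.sqrt (Cfun x y z - Dfun x y z)

/-- `θ` is tri-convex on `[0,1]³`: convex on `[0,1]` in each argument, for all
fixed values in `[0,1]` of the other two arguments. -/
def TriConvexOn01 (θ : ℝ → ℝ → ℝ → ℝ) : Prop :=
  (∀ y ∈ Set.Icc (0 : ℝ) 1, ∀ z ∈ Set.Icc (0 : ℝ) 1,
    ConvexOn ℝ (Set.Icc (0 : ℝ) 1) (fun x => θ x y z)) ∧
  (∀ x ∈ Set.Icc (0 : ℝ) 1, ∀ z ∈ Set.Icc (0 : ℝ) 1,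
    ConvexOn ℝ (Set.Icc (0 : ℝ) 1) (fun y => θ x y z)) ∧
  (∀ x ∈ Set.Icc (0 : ℝ) 1, ∀ y ∈ Set.Icc (0 : ℝ) 1,
    ConvexOn ℝ (Set.Icc (0 : ℝ) 1) (fun z => θ x y z))

/-- The lower tri-convex envelope of `g`:
`ğ(x,y,z) := sup { θ(x,y,z) | θ : [0,1]³ → [0,1], θ ≤ g pointwise, θ tri-convex }`. -/
noncomputable def gEnv (x y z : ℝ) : ℝ :=
  sSup { t : ℝ | ∃ θ : ℝ → ℝ → ℝ → ℝ,
    (∀ a ∈ Set.Icc (0 : ℝ) 1, ∀ b ∈ Set.Icc (0 : ℝ) 1, ∀ c ∈ Set.Icc (0 : ℝ) 1,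
      θ a b c ∈ Set.Icc (0 : ℝ) 1 ∧ θ a b c ≤ gfun a b c) ∧
    TriConvexOn01 θ ∧ θ x y z = t }

lemma gfun_nonneg (x y z : ℝ) : 0 ≤ gfun x y z :=
  add_nonneg (Real.sqrt_nonneg _) (Real.sqrt_nonneg _)

/-- For BMS channels `U, V, W` with BSC-decompositions given by the mixtures
`(α, x)`, `(β, y)`, `(γ, z)` of Bhattacharyya parameters,
`Z((U Ｐ V) Ｓ W) = ∑ α_i β_j γ_k g(x_i, y_j, z_k) ≥ ğ(Z(U), Z(V), Z(W))`. -/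
theorem stmt_12 (l m n : ℕ) (α : Fin l → ℝ) (β : Fin m → ℝ) (γ : Fin n → ℝ)
    (hα : ∀ i, 0 ≤ α i) (hβ : ∀ j, 0 ≤ β j) (hγ : ∀ k, 0 ≤ γ k)
    (hαsum : ∑ i, α i = 1) (hβsum : ∑ j, β j = 1) (hγsum : ∑ k, γ k = 1)
    (x : Fin l → ℝ) (y : Fin m → ℝ) (z : Fin n → ℝ)
    (hx : ∀ i, x i ∈ Set.Icc (0 : ℝ) 1) (hy : ∀ j, y j ∈ Set.Icc (0 : ℝ) 1)
    (hz : ∀ k, z k ∈ Set.Icc (0 : ℝ) 1) :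
    ∑ i, ∑ j, ∑ k, α i * β j * γ k * gfun (x i) (y j) (z k)
      ≥ gEnv (∑ i, α i * x i) (∑ j, β j * y j) (∑ k, γ k * z k) := by
  have hXmem : (∑ i, α i * x i) ∈ Set.Icc (0 : ℝ) 1 := by
    have := (convex_Icc (0:ℝ) 1).sum_mem (t := Finset.univ)
      (fun i _ => hα i) hαsum (fun i _ => hx i)
    simpa [smul_eq_mul] using this
  have hYmem : (∑ j, β j * y j) ∈ Set.Icc (0 : ℝ) 1 := by
    have := (convex_Icc (0:ℝ) 1).sum_mem (t := Finset.univ)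
      (fun j _ => hβ j) hβsum (fun j _ => hy j)
    simpa [smul_eq_mul] using this
  have hZmem : (∑ k, γ k * z k) ∈ Set.Icc (0 : ℝ) 1 := by
    have := (convex_Icc (0:ℝ) 1).sum_mem (t := Finset.univ)
      (fun k _ => hγ k) hγsum (fun k _ => hz k)
    simpa [smul_eq_mul] using this
  have hLHS0 : 0 ≤ ∑ i, ∑ j, ∑ k, α i * β j * γ k * gfun (x i) (y j) (z k) := by
    refine Finset.sum_nonneg fun i _ => Finset.sum_nonneg fun j _ =>
      Finset.sum_nonneg fun k _ => ?_
    exact mul_nonneg (mul_nonneg (mul_nonneg (hα i) (hβ j)) (hγ k)) (gfun_nonneg _ _ _)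
  refine Real.sSup_le ?_ hLHS0
  rintro t ⟨θ, hθle, ⟨hcx, hcy, hcz⟩, rfl⟩
  -- step in z for fixed a b in Icc
  have stepz : ∀ a ∈ Set.Icc (0:ℝ) 1, ∀ b ∈ Set.Icc (0:ℝ) 1,
      θ a b (∑ k, γ k * z k) ≤ ∑ k, γ k * gfun a b (z k) := by
    intro a ha b hb
    have h1 : θ a b (∑ k, γ k * z k) ≤ ∑ k, γ k * θ a b (z k) := by
      have := (hcz a ha b hb).map_sum_le (t := Finset.univ)
        (fun k _ => hγ k) hγsum (fun k _ => hz k)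
      simpa [smul_eq_mul] using this
    refine h1.trans (Finset.sum_le_sum fun k _ => ?_)
    exact mul_le_mul_of_nonneg_left ((hθle a ha b hb (z k) (hz k)).2) (hγ k)
  have stepy : ∀ a ∈ Set.Icc (0:ℝ) 1,
      θ a (∑ j, β j * y j) (∑ k, γ k * z k)
        ≤ ∑ j, β j * ∑ k, γ k * gfun a (y j) (z k) := by
    intro a ha
    have h1 : θ a (∑ j, β j * y j) (∑ k, γ k * z k)
        ≤ ∑ j, β j * θ a (y j) (∑ k, γ k * z k) := by
      have := (hcy a ha _ hZmem).map_sum_le (t := Finset.univ)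
        (fun j _ => hβ j) hβsum (fun j _ => hy j)
      simpa [smul_eq_mul] using this
    refine h1.trans (Finset.sum_le_sum fun j _ => ?_)
    exact mul_le_mul_of_nonneg_left (stepz a ha (y j) (hy j)) (hβ j)
  have h1 : θ (∑ i, α i * x i) (∑ j, β j * y j) (∑ k, γ k * z k)
      ≤ ∑ i, α i * θ (x i) (∑ j, β j * y j) (∑ k, γ k * z k) := by
    have := (hcx _ hYmem _ hZmem).map_sum_le (t := Finset.univ)
      (fun i _ => hα i) hαsum (fun i _ => hx i)
    simpa [smul_eq_mul] using this
  refine h1.trans ?_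
  have h2 : ∑ i, α i * θ (x i) (∑ j, β j * y j) (∑ k, γ k * z k)
      ≤ ∑ i, α i * ∑ j, β j * ∑ k, γ k * gfun (x i) (y j) (z k) :=
    Finset.sum_le_sum fun i _ =>
      mul_le_mul_of_nonneg_left (stepy (x i) (hx i)) (hα i)
  refine h2.trans (le_of_eq ?_)
  refine Finset.sum_congr rfl fun i _ => ?_
  rw [Finset.mul_sum]
  refine Finset.sum_congr rfl fun j _ => ?_
  rw [← mul_assoc, Finset.mul_sum]
  exact Finset.sum_congr rfl fun k _ => by ring
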